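/- If f : ℝ → ℝ is a differentiable strictly monotone function whose derivative vanishes on a dense subset D ⊊ ℝ, and φ : ℝ → ℝ is a nonzero exponential-like function (a finite sum φ(x) = Σ a_j e^{b_j x} with nonzero a_j and distinct nonzero b_j), then φ ∘ f is differentiable, (φ ∘ f)' vanishes on a dense set, and φ ∘ f is nonconstant on every nondegenerate interval of ℝ. -/

import Mathlib

open Real Set

lemma expsum_hasDerivAt {m : ℕ} (c b : Fin m → ℝ) (x : ℝ) :
    HasDerivAt (fun x => ∑ j, c j * Real.exp (b j * x))
      (∑ j, c j * b j * Real.exp (b j * x)) x := by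
  have : HasDerivAt (fun x => ∑ j, c j * Real.exp (b j * x))
      (∑ j, c j * (Real.exp (b j * x) * b j)) x := by
    apply HasDerivAt.fun_sum
    intro j _
    have := (((hasDerivAt_id x).const_mul (b j)).exp).const_mul (c j)
    simpa using this
  convert this using 1
  apply Finset.sum_congr rfl
  intro j _; ring

lemma expsum_coeffs_zero {m : ℕ} (a b : Fin m → ℝ) (hbinj : Function.Injective b)
    (h : ∀ x, ∑ j, a j * Real.exp (b j * x) = 0) : ∀ j, a j = 0 := by
  have key : ∀ (n : ℕ) (x : ℝ), ∑ j, a j * b j ^ n * Real.exp (b j * x) = 0 := by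
    intro n
    induction n with
    | zero => simpa using h
    | succ n ih =>
      intro x
      have h0 : (fun x => ∑ j, (fun j => a j * b j ^ n) j * Real.exp (b j * x)) = fun _ => (0:ℝ) :=
        funext ih
      have hd := expsum_hasDerivAt (fun j => a j * b j ^ n) b x
      rw [h0] at hd
      have := hd.unique (hasDerivAt_const x 0)
      rw [← this]
      apply Finset.sum_congr rfl
      intro j _; ring
  have hc : ∀ n : ℕ, ∑ j, a j * b j ^ n = 0 := by
    intro n
    have := key n 0
    simpa using this
  have hM : (Matrix.transpose (Matrix.vandermonde b)).mulVec a = 0 := by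
    funext i
    simp only [Matrix.mulVec, dotProduct, Matrix.transpose_apply, Matrix.vandermonde_apply,
      Pi.zero_apply]
    rw [← hc i]
    apply Finset.sum_congr rfl
    intro j _; ring
  have hdet : (Matrix.transpose (Matrix.vandermonde b)).det ≠ 0 := by
    rw [Matrix.det_transpose]
    exact Matrix.det_vandermonde_ne_zero_iff.mpr hbinj
  have := Matrix.eq_zero_of_mulVec_eq_zero hdet hM
  intro j; exact congrFun this j

theorem stmt_6 (f : ℝ → ℝ) (hdiff : Differentiable ℝ f)
    (hmono : StrictMono f ∨ StrictAnti f)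
    (hdense : Dense {x : ℝ | deriv f x = 0})
    (hne : {x : ℝ | deriv f x = 0} ≠ Set.univ)
    (m : ℕ) (hm : 1 ≤ m) (a b : Fin m → ℝ)
    (ha : ∀ j, a j ≠ 0) (hb : ∀ j, b j ≠ 0) (hbinj : Function.Injective b)
    (φ : ℝ → ℝ) (hφ : φ = fun x => ∑ j, a j * Real.exp (b j * x)) :
    Differentiable ℝ (φ ∘ f) ∧
      Dense {x : ℝ | deriv (φ ∘ f) x = 0} ∧
      ∀ c d : ℝ, c < d → ∃ x ∈ Set.Ioo c d, ∃ y ∈ Set.Ioo c d,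
        (φ ∘ f) x ≠ (φ ∘ f) y := by
  have hφdiff : Differentiable ℝ φ := by
    intro x
    exact ((expsum_hasDerivAt a b x).congr_of_eventuallyEq (by rw [hφ])).differentiableAt
  have hcomp : Differentiable ℝ (φ ∘ f) := hφdiff.comp hdiff
  refine ⟨hcomp, ?_, ?_⟩
  · apply hdense.mono
    intro x hx
    simp only [Set.mem_setOf_eq] at hx ⊢
    rw [deriv_comp x (hφdiff _) (hdiff x), hx, mul_zero]
  · intro c d hcd
    by_contra hcon
    push_neg at hcon
    -- φ ∘ f is constant on Ioo c d
    set x₁ := c + (d - c) / 3 with hx1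
    set x₂ := d - (d - c) / 3 with hx2
    have hx1m : x₁ ∈ Ioo c d := by constructor <;> simp only [hx1] <;> linarith
    have hx2m : x₂ ∈ Ioo c d := by constructor <;> simp only [hx2] <;> linarith
    have hx12 : x₁ < x₂ := by simp only [hx1, hx2]; linarith
    have hIoo : Ioo x₁ x₂ ⊆ Ioo c d := Ioo_subset_Ioo (le_of_lt hx1m.1) (le_of_lt hx2m.2)
    have hcontOn : ContinuousOn f (Icc x₁ x₂) := hdiff.continuous.continuousOn
    obtain ⟨u, v, huv, hsub⟩ : ∃ u v : ℝ, u < v ∧ Ioo u v ⊆ f '' Ioo x₁ x₂ := by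
      rcases hmono with hsm | hsa
      · exact ⟨f x₁, f x₂, hsm hx12, intermediate_value_Ioo (le_of_lt hx12) hcontOn⟩
      · exact ⟨f x₂, f x₁, hsa hx12, intermediate_value_Ioo' (le_of_lt hx12) hcontOn⟩
    have hφconst : ∀ z ∈ Ioo u v, φ z = φ (f x₁) := by
      intro z hz
      obtain ⟨w, hw, rfl⟩ := hsub hz
      exact hcon w (hIoo hw) x₁ hx1m
    -- deriv φ vanishes on Ioo u v
    have hderiv0 : ∀ z ∈ Ioo u v, deriv φ z = 0 := by
      intro z hz
      have hev : φ =ᶠ[nhds z] fun _ => φ (f x₁) := by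
        filter_upwards [isOpen_Ioo.mem_nhds hz] with w hw using hφconst w hw
      rw [hev.deriv_eq, deriv_const]
    have hderivφ : deriv φ = fun x => ∑ j, a j * b j * Real.exp (b j * x) := by
      funext x
      exact ((expsum_hasDerivAt a b x).congr_of_eventuallyEq (by rw [hφ])).deriv
    have hanal : AnalyticOnNhd ℝ (deriv φ) Set.univ := by
      rw [hderivφ]
      intro x _
      apply Finset.analyticAt_fun_sum
      intro j _
      exact analyticAt_const.mul ((analyticAt_const.mul analyticAt_id).rexp)
    have hz0 : (u + v) / 2 ∈ Ioo u v := ⟨by linarith, by linarith⟩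
    have hEq : Set.EqOn (deriv φ) 0 Set.univ := by
      apply hanal.eqOn_zero_of_preconnected_of_eventuallyEq_zero isPreconnected_univ
        (Set.mem_univ ((u + v) / 2))
      filter_upwards [isOpen_Ioo.mem_nhds hz0] with w hw using hderiv0 w hw
    have hzero : ∀ x : ℝ, ∑ j, a j * b j * Real.exp (b j * x) = 0 := by
      intro x
      have := hEq (Set.mem_univ x)
      rw [hderivφ] at this
      exact this
    have := expsum_coeffs_zero (fun j => a j * b j) b hbinj hzero ⟨0, hm⟩
    exact (mul_ne_zero (ha _) (hb _)) this
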